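/- The dynamic-symmetry-reduction fixpoint computes the representatives of reachable states: the least fixpoint of Z ↦ Init ∪ α(post_R(Z)) starting from α(Init) equals { rep([s]) : s reachable from Init via R }, where α maps each state to its orbit representative and rep is G-invariant (rep([π(s)]) = rep([s])), provided Init is closed under taking representatives, and R is invariant under G. -/

import Mathlib

/-- The dynamic-symmetry-reduction fixpoint computes the representatives of
reachable states: the least fixpoint of `Z ↦ Init ∪ α(post_R Z)` (with
`α T = rep '' T`) equals `{ rep s : s reachable from Init via R }`, provided
`rep` picks a `G`-invariant representative from each orbit, `Init` is closed
under taking representatives, and `R` and `Init` are invariant under `G`. -/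
theorem dynamic_symmetry_reduction_fixpoint {S : Type*}
    (G : Subgroup (Equiv.Perm S)) (R : S → S → Prop) (Init : Set S)
    (rep : S → S)
    (hrep_orbit : ∀ s : S, ∃ π ∈ G, rep s = π s)
    (hrep_inv : ∀ π ∈ G, ∀ s : S, rep (π s) = rep s)
    (hR : ∀ π ∈ G, ∀ s t : S, R s t ↔ R (π s) (π t))
    (hInit : ∀ π ∈ G, (π : S → S) '' Init = Init)
    (hInit_rep : rep '' Init = Init) :
    IsLeast {Z : Set S | Init ∪ rep '' {t : S | ∃ z ∈ Z, R z t} = Z}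
      {t : S | ∃ s : S, (∃ s0 ∈ Init, Relation.ReflTransGen R s0 s) ∧
        t = rep s} := by
  set W : Set S := {t : S | ∃ s : S, (∃ s0 ∈ Init, Relation.ReflTransGen R s0 s) ∧
      t = rep s} with hW
  -- key step lemma: if rep s ∈ Z and R s t then rep t ∈ rep '' post Z
  have step : ∀ (Z : Set S) (s t : S), rep s ∈ Z → R s t →
      rep t ∈ rep '' {t : S | ∃ z ∈ Z, R z t} := by
    intro Z s t hs hst
    obtain ⟨π, hπ, hreps⟩ := hrep_orbit s
    refine ⟨π t, ⟨rep s, hs, ?_⟩, hrep_inv π hπ t⟩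
    rw [hreps]; exact (hR π hπ s t).mp hst
  -- any pre-fixpoint contains W
  have least : ∀ Z : Set S, Init ⊆ Z → rep '' {t : S | ∃ z ∈ Z, R z t} ⊆ Z → W ⊆ Z := by
    intro Z hI hP t ht
    obtain ⟨s, ⟨s0, hs0, hreach⟩, rfl⟩ := ht
    induction hreach with
    | refl =>
        apply hI
        rw [← hInit_rep]
        exact ⟨s0, hs0, rfl⟩
    | tail _ hbc ih => exact hP (step Z _ _ ih hbc)
  have hIW : Init ⊆ W := by
    intro t ht
    rw [← hInit_rep] at ht
    obtain ⟨s, hs, rfl⟩ := ht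
    exact ⟨s, ⟨s, hs, Relation.ReflTransGen.refl⟩, rfl⟩
  have hPW : rep '' {t : S | ∃ z ∈ W, R z t} ⊆ W := by
    rintro _ ⟨t, ⟨z, ⟨s, ⟨s0, hs0, hreach⟩, rfl⟩, hzt⟩, rfl⟩
    obtain ⟨π, hπ, hreps⟩ := hrep_orbit s
    rw [hreps] at hzt
    have h2 : R s ((π : Equiv.Perm S)⁻¹ t) := by
      have := (hR π hπ s ((π : Equiv.Perm S)⁻¹ t)).mpr
      simp only [Equiv.Perm.coe_inv, Equiv.apply_symm_apply] at this
      exact this hzt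
    refine ⟨(π : Equiv.Perm S)⁻¹ t, ⟨s0, hs0, hreach.tail h2⟩, ?_⟩
    have := hrep_inv π hπ ((π : Equiv.Perm S)⁻¹ t)
    simp only [Equiv.Perm.coe_inv, Equiv.apply_symm_apply] at this
    exact this
  constructor
  · -- W is a fixpoint
    apply Set.Subset.antisymm
    · exact Set.union_subset hIW hPW
    · -- W ⊆ Init ∪ rep '' post W
      rintro _ ⟨s, ⟨s0, hs0, hreach⟩, rfl⟩
      induction hreach with
      | refl =>
          left; rw [← hInit_rep]; exact ⟨s0, hs0, rfl⟩
      | @tail b c hb hbc _ =>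
          right
          exact step W b c ⟨b, ⟨s0, hs0, hb⟩, rfl⟩ hbc
  · intro Z hZ
    refine least Z ?_ ?_
    · rw [← hZ]; exact Set.subset_union_left
    · exact Set.Subset.trans Set.subset_union_right hZ.subset
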